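/- Let N ≥ 1 be an integer and let m, p, σ be real numbers with max(N−2,0)/N < m < 1, p > 1 and σ > σ* := 2(p−1)/(1−m). Let 0 < a < b ≤ ∞ and let f : (a,b) → (0,∞) be twice continuously differentiable and satisfy the profile equation (P) at every ξ ∈ (a,b). Define, for η ∈ (log a, log b), x(η) := (α/m) e^{2η} f(e^η)^{1−m}, y(η) := e^η f'(e^η)/f(e^η), z(η) := (1/m) e^{(σ+2)η} f(e^η)^{p−m}. Then (x,y,z) is a solution on (log a, log b) of the system (S): x' = x(2+(1−m)y), y' = −x − (N−2)y + z − m y² − ((p−m)/(σ+2)) x y, z' = z(σ+2 + (p−m)y). -/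

import Mathlib

set_option maxHeartbeats 1000000

/-- The change of variables x = (α/m)ξ²f^{1-m}, y = ξf'/f,
z = (1/m)ξ^{σ+2}f^{p-m}, η = log ξ, maps any positive C² solution of the profile
equation (P) on (a,b) (with 0 < a < b ≤ ∞) into a solution of the system (S)
on (log a, log b). -/
theorem stmt8 (N : ℕ) (hN : 1 ≤ N) (m p σ : ℝ)
    (hm1 : max ((N : ℝ) - 2) 0 / N < m) (hm2 : m < 1) (hp : 1 < p)
    (hσ : 2 * (p - 1) / (1 - m) < σ)
    (α β : ℝ)
    (hα : α = (σ + 2) / ((1 - m) * (σ - 2 * (p - 1) / (1 - m))))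
    (hβ : β = (p - m) / ((1 - m) * (σ - 2 * (p - 1) / (1 - m))))
    (a : ℝ) (b : EReal) (ha : 0 < a) (hab : (a : EReal) < b)
    (f : ℝ → ℝ)
    (hreg : ContDiffOn ℝ 2 f {ξ : ℝ | a < ξ ∧ (ξ : EReal) < b})
    (hpos : ∀ ξ : ℝ, a < ξ → (ξ : EReal) < b → 0 < f ξ)
    (hP : ∀ ξ : ℝ, a < ξ → (ξ : EReal) < b →
      deriv (deriv (fun s : ℝ => f s ^ m)) ξ
        + (((N : ℝ) - 1) / ξ) * deriv (fun s : ℝ => f s ^ m) ξ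
        + α * f ξ + β * ξ * deriv f ξ - ξ ^ σ * f ξ ^ p = 0)
    (X Y Z : ℝ → ℝ)
    (hX : X = fun η : ℝ => (α / m) * Real.exp (2 * η) * f (Real.exp η) ^ (1 - m))
    (hY : Y = fun η : ℝ => Real.exp η * deriv f (Real.exp η) / f (Real.exp η))
    (hZ : Z = fun η : ℝ => (1 / m) * Real.exp ((σ + 2) * η) * f (Real.exp η) ^ (p - m)) :
    ∀ η : ℝ, a < Real.exp η → ((Real.exp η : ℝ) : EReal) < b →
      HasDerivAt X (X η * (2 + (1 - m) * Y η)) η ∧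
      HasDerivAt Y (-(X η) - ((N : ℝ) - 2) * Y η + Z η - m * (Y η) ^ 2
        - (p - m) / (σ + 2) * X η * Y η) η ∧
      HasDerivAt Z (Z η * (σ + 2 + (p - m) * Y η)) η := by
  subst hX hY hZ hα hβ
  intro η hηa hηb
  have hm0 : 0 < m :=
    lt_of_le_of_lt (div_nonneg (le_max_right _ _) (Nat.cast_nonneg N)) hm1
  have h1m : 0 < 1 - m := by linarith
  have hσ0 : 0 < σ := lt_trans (div_pos (by linarith) h1m) hσ
  have hσ2 : (0:ℝ) < σ + 2 := by linarith
  have hκpos : (0:ℝ) < σ * (1 - m) - 2 * (p - 1) := by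
    have := (div_lt_iff₀ h1m).mp hσ
    nlinarith
  have hκ2 : σ * (1 - m) - 2 * (p - 1) ≠ 0 := hκpos.ne'
  set U := {ξ : ℝ | a < ξ ∧ (ξ : EReal) < b} with hUdef
  have hU : IsOpen U := by
    have : U = Set.Ioi a ∩ ((↑) : ℝ → EReal) ⁻¹' Set.Iio b := by
      ext s; simp [hUdef, Set.mem_Ioi, Set.mem_Iio]
    rw [this]
    exact isOpen_Ioi.inter (isOpen_Iio.preimage continuous_coe_real_ereal)
  have hdiff : ∀ s ∈ U, HasDerivAt f (deriv f s) s := fun s hs =>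
    ((hreg.differentiableOn (by norm_num) s hs).differentiableAt
      (hU.mem_nhds hs)).hasDerivAt
  have hdf1 : ContDiffOn ℝ 1 (deriv f) U := hreg.deriv_of_isOpen hU (by norm_num)
  set ξ := Real.exp η with hξdef
  have hξU : ξ ∈ U := ⟨hηa, hηb⟩
  have hξ0 : 0 < ξ := Real.exp_pos η
  have hF : 0 < f ξ := hpos ξ hηa hηb
  have hD1 : HasDerivAt f (deriv f ξ) ξ := hdiff ξ hξU
  have hD2 : HasDerivAt (deriv f) (deriv (deriv f) ξ) ξ :=
    ((hdf1.differentiableOn (by norm_num) ξ hξU).differentiableAt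
      (hU.mem_nhds hξU)).hasDerivAt
  set D1 := deriv f ξ with hD1def
  set D2 := deriv (deriv f) ξ with hD2def
  set F := f ξ with hFdef
  have hFm : 0 < F ^ m := Real.rpow_pos_of_pos hF m
  -- rpow rewriting facts
  have e1 : F ^ (m - 1) = F ^ m / F := by
    rw [Real.rpow_sub hF, Real.rpow_one]
  have e2 : F ^ (m - 1 - 1) = F ^ m / F / F := by
    rw [Real.rpow_sub hF, Real.rpow_sub hF, Real.rpow_one]
  have e3 : F ^ (1 - m) = F / F ^ m := by
    rw [Real.rpow_sub hF, Real.rpow_one]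
  have e4 : F ^ (1 - m - 1) = F / F ^ m / F := by
    rw [Real.rpow_sub hF, Real.rpow_sub hF, Real.rpow_one]
  have e5 : F ^ (p - m) = F ^ p / F ^ m := by rw [Real.rpow_sub hF]
  have e6 : F ^ (p - m - 1) = F ^ p / F ^ m / F := by
    rw [Real.rpow_sub hF, Real.rpow_sub hF, Real.rpow_one]
  have eexp2 : Real.exp (2 * η) = ξ * ξ := by
    rw [two_mul, Real.exp_add]
  have eexpσ : Real.exp ((σ + 2) * η) = ξ ^ σ * (ξ * ξ) := by
    rw [Real.rpow_def_of_pos (Real.exp_pos η), Real.log_exp, ← eexp2, ← Real.exp_add]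
    ring_nf
  -- first derivative of f^m on U
  have hdg : ∀ s ∈ U, deriv (fun s : ℝ => f s ^ m) s
      = deriv f s * m * f s ^ (m - 1) := fun s hs =>
    (((hdiff s hs).rpow_const (Or.inl (hpos s hs.1 hs.2).ne'))).deriv
  -- second derivative of f^m at ξ
  have hev : deriv (fun s : ℝ => f s ^ m)
      =ᶠ[nhds ξ] fun s => deriv f s * m * f s ^ (m - 1) :=
    Filter.eventuallyEq_of_mem (hU.mem_nhds hξU) hdg
  have hφ : HasDerivAt (fun s => deriv f s * m * f s ^ (m - 1))
      (D2 * m * F ^ (m - 1) + D1 * m * (D1 * (m - 1) * F ^ (m - 1 - 1))) ξ :=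
    (hD2.mul_const m).mul (hD1.rpow_const (Or.inl hF.ne'))
  have hd2g : deriv (deriv (fun s : ℝ => f s ^ m)) ξ
      = D2 * m * F ^ (m - 1) + D1 * m * (D1 * (m - 1) * F ^ (m - 1 - 1)) := by
    rw [hev.deriv_eq]; exact hφ.deriv
  -- the profile equation in explicit polynomial form
  have hPDE := hP ξ hηa hηb
  simp only [← hD1def, ← hFdef] at hPDE
  rw [hd2g, hdg ξ hξU, e1, e2] at hPDE
  have hden : m * F ^ m * F ^ 3 * ξ * (σ * (1 - m) - 2 * (p - 1)) ^ 2 ≠ 0 :=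
    mul_ne_zero (mul_ne_zero (mul_ne_zero (mul_ne_zero hm0.ne' hFm.ne')
      (pow_ne_zero 3 hF.ne')) hξ0.ne') (pow_ne_zero 2 hκ2)
  have hD2val : D2 = (ξ ^ σ * F ^ p * F ^ 4 * ξ * (σ * (1 - m) - 2 * (p - 1)) ^ 2
        - D1 ^ 2 * m * (m - 1) * F ^ m * F ^ 2 * ξ * (σ * (1 - m) - 2 * (p - 1)) ^ 2
        - ((N : ℝ) - 1) * D1 * m * F ^ m * F ^ 3 * (σ * (1 - m) - 2 * (p - 1)) ^ 2
        - (σ + 2) * F ^ 5 * ξ * (σ * (1 - m) - 2 * (p - 1))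
        - (p - m) * ξ ^ 2 * D1 * F ^ 4 * (σ * (1 - m) - 2 * (p - 1)))
      / (m * F ^ m * F ^ 3 * ξ * (σ * (1 - m) - 2 * (p - 1)) ^ 2) := by
    rw [eq_div_iff hden]
    field_simp [hκ2] at hPDE
    simp only [← hD1def] at hPDE
    linear_combination (F ^ 2 * (σ * (1 - m) - 2 * (p - 1))) * hPDE
  -- derivative building blocks
  have hfe : HasDerivAt (fun η : ℝ => f (Real.exp η)) (D1 * ξ) η :=
    hD1.comp η (Real.hasDerivAt_exp η)
  have hdfe : HasDerivAt (fun η : ℝ => deriv f (Real.exp η)) (D2 * ξ) η :=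
    by have := hD2.comp η (Real.hasDerivAt_exp η); exact this
  have he2 : HasDerivAt (fun η : ℝ => Real.exp (2 * η))
      (Real.exp (2 * η) * (2 * 1)) η :=
    ((hasDerivAt_id η).const_mul 2).exp
  have heσ : HasDerivAt (fun η : ℝ => Real.exp ((σ + 2) * η))
      (Real.exp ((σ + 2) * η) * ((σ + 2) * 1)) η :=
    ((hasDerivAt_id η).const_mul (σ + 2)).exp
  refine ⟨?_, ?_, ?_⟩
  · -- X equation
    have h1 : HasDerivAt
        (fun η : ℝ => (σ + 2) / ((1 - m) * (σ - 2 * (p - 1) / (1 - m))) / m *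
          Real.exp (2 * η) * f (Real.exp η) ^ (1 - m))
        (((σ + 2) / ((1 - m) * (σ - 2 * (p - 1) / (1 - m))) / m *
            (Real.exp (2 * η) * (2 * 1))) * F ^ (1 - m)
          + ((σ + 2) / ((1 - m) * (σ - 2 * (p - 1) / (1 - m))) / m *
            Real.exp (2 * η)) * (D1 * ξ * (1 - m) * F ^ (1 - m - 1))) η :=
      ((he2.const_mul _).mul (hfe.rpow_const (Or.inl hF.ne')))
    convert h1 using 1
    beta_reduce
    simp only [← hξdef]
    simp only [← hFdef, ← hD1def]
    rw [e3, e4, eexp2]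
    field_simp [hκ2]
  · -- Y equation
    have hu : HasDerivAt (fun η : ℝ => Real.exp η * deriv f (Real.exp η))
        (ξ * D1 + ξ * (D2 * ξ)) η :=
      (Real.hasDerivAt_exp η).mul hdfe
    have h2 : HasDerivAt
        (fun η : ℝ => Real.exp η * deriv f (Real.exp η) / f (Real.exp η))
        (((ξ * D1 + ξ * (D2 * ξ)) * F - ξ * D1 * (D1 * ξ)) / F ^ 2) η :=
      hu.div hfe hF.ne'
    convert h2 using 1
    beta_reduce
    simp only [← hξdef]
    simp only [← hFdef, ← hD1def]
    rw [hD2val, e3, e5, eexp2, eexpσ]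
    field_simp [hκ2]
    ring
  · -- Z equation
    have h3 : HasDerivAt
        (fun η : ℝ => 1 / m * Real.exp ((σ + 2) * η) * f (Real.exp η) ^ (p - m))
        ((1 / m * (Real.exp ((σ + 2) * η) * ((σ + 2) * 1))) * F ^ (p - m)
          + (1 / m * Real.exp ((σ + 2) * η)) * (D1 * ξ * (p - m) * F ^ (p - m - 1))) η :=
      ((heσ.const_mul _).mul (hfe.rpow_const (Or.inl hF.ne')))
    convert h3 using 1
    beta_reduce
    simp only [← hξdef]
    simp only [← hFdef, ← hD1def]
    rw [e5, e6, eexpσ]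
    field_simp [hκ2]
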